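/- arXiv:1807.07561 — 2 statements merged into one kernel-verified Lean document; each statement's English description precedes it below -/
import Mathlib

section
/- (Gessel–Viennot–Lindström) Let G be a DAG on {1,...,m} with edge-weight matrix Λ (λ_{ij} = 0 if i→j is not an edge), and let A, B be subsets of vertices with |A| = |B| = ℓ. Then det(((I−Λ)^{-1})_{A,B}) = Σ_{S ∈ N(A,B)} (−1)^S λ^S, where N(A,B) is the set of systems of ℓ pairwise vertex-disjoint directed paths connecting A bijectively to B, λ^S is the product of the edge weights over all paths, and (−1)^S is the sign of the induced permutation from A to B. In particular, det(((I−Λ)^{-1})_{A,B}) = 0 (identically in the λ's) if and only if every system of ℓ directed paths from A to B has two paths that share a vertex. -/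
open scoped Matrix

/-- A finite set `S` of vertices is (the vertex set of) a directed path from `a` to `b`
    in a DAG whose edges go strictly upward (so a path is determined by its vertex
    set). -/
def IsPathSet {n : ℕ} (E : Fin n → Fin n → Prop) (S : Finset (Fin n))
    (a b : Fin n) : Prop :=
  (S.sort (· ≤ ·)).Chain' E ∧ (S.sort (· ≤ ·)).head? = some a ∧
    (S.sort (· ≤ ·)).getLast? = some b

instance {n : ℕ} (E : Fin n → Fin n → Prop) [DecidableRel E]
    (S : Finset (Fin n)) (a b : Fin n) : Decidable (IsPathSet E S a b) := by
  unfold IsPathSet List.Chain'; infer_instance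

/-- The path monomial λ^P. -/
def pathWeight {n : ℕ} (Λ : Matrix (Fin n) (Fin n) ℝ) (S : Finset (Fin n)) : ℝ :=
  (((S.sort (· ≤ ·)).zip (S.sort (· ≤ ·)).tail).map fun e => Λ e.1 e.2).prod

set_option linter.unusedSectionVars false

namespace GVL

section Lists

variable {α : Type*}

lemma chain'_iff_zip {R : α → α → Prop} : ∀ {l : List α},
    l.Chain' R ↔ ∀ p ∈ l.zip l.tail, R p.1 p.2
  | [] => by simp [List.Chain']
  | [a] => by simp [List.Chain']
  | a :: b :: t => by
    rw [List.Chain', List.isChain_cons_cons, show List.IsChain R (b :: t) ↔ _ from chain'_iff_zip (l := b :: t)]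
    simp only [List.tail_cons, List.zip_cons_cons, List.mem_cons]
    constructor
    · rintro ⟨h1, h2⟩ p (rfl | hp)
      · exact h1
      · exact h2 p hp
    · intro h
      exact ⟨h (a, b) (Or.inl rfl), fun p hp => h p (Or.inr hp)⟩

lemma sorted_head_le [Preorder α] {l : List α} (h : l.Pairwise (· ≤ ·)) {x : α}
    (hx : x ∈ l) (h' : l ≠ []) : l.head h' ≤ x := by
  cases l with
  | nil => simp at hx
  | cons a t =>
    rcases List.mem_cons.mp hx with rfl | hx
    · simp
    · exact (List.pairwise_cons.mp h).1 x hx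

lemma le_getLast_of_sorted [Preorder α] : ∀ {l : List α}, l.Pairwise (· ≤ ·) → ∀ {x : α},
    x ∈ l → ∀ (h' : l ≠ []), x ≤ l.getLast h'
  | [], _, _, hx, _ => by simp at hx
  | [a], _, x, hx, _ => by simp at hx; simp [hx]
  | a :: b :: t, h, x, hx, _ => by
    rw [List.getLast_cons (by simp)]
    rcases List.mem_cons.mp hx with rfl | hx
    · exact le_trans ((List.pairwise_cons.mp h).1 b (by simp))
        (le_getLast_of_sorted (List.pairwise_cons.mp h).2 (by simp) (by simp))
    · exact le_getLast_of_sorted (List.pairwise_cons.mp h).2 hx (by simp)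

end Lists

variable {n : ℕ}

lemma sort_eq_of {S : Finset (Fin n)} {l : List (Fin n)}
    (h1 : l.Pairwise (· ≤ ·)) (h2 : (l : Multiset (Fin n)) = S.val) :
    S.sort (· ≤ ·) = l := by
  refine List.Perm.eq_of_pairwise' (Finset.pairwise_sort _ _) h1 ?_
  rw [← Multiset.coe_eq_coe, Finset.sort_eq, h2]

lemma eq_empty_of_sort_eq_nil {S : Finset (Fin n)} (h : S.sort (· ≤ ·) = []) :
    S = ∅ := by
  refine Finset.eq_empty_iff_forall_notMem.mpr fun x hx => ?_
  have : x ∈ S.sort (· ≤ ·) := (Finset.mem_sort _).mpr hx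
  rw [h] at this
  simp at this

/-! ### weights of lists -/

variable (Λ : Matrix (Fin n) (Fin n) ℝ)

def wt : List (Fin n) → ℝ
  | [] => 1
  | [_] => 1
  | a :: b :: t => Λ a b * wt (b :: t)

lemma wt_eq : ∀ l : List (Fin n), ((l.zip l.tail).map fun e => Λ e.1 e.2).prod = wt Λ l
  | [] => by simp [wt]
  | [a] => by simp [wt]
  | a :: b :: t => by
    have := wt_eq (b :: t)
    simp only [List.tail_cons, List.zip_cons_cons, List.map_cons, List.prod_cons, wt] at this ⊢
    rw [this]

lemma pathWeight_eq (S : Finset (Fin n)) : pathWeight Λ S = wt Λ (S.sort (· ≤ ·)) :=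
  wt_eq Λ _

lemma wt_append : ∀ (l₁ : List (Fin n)) (h₁ : l₁ ≠ []) (l₂ : List (Fin n)) (h₂ : l₂ ≠ []),
    wt Λ (l₁ ++ l₂) = wt Λ l₁ * Λ (l₁.getLast h₁) (l₂.head h₂) * wt Λ l₂
  | [], h₁, _, _ => absurd rfl h₁
  | [a], _, l₂, h₂ => by
    cases l₂ with
    | nil => exact absurd rfl h₂
    | cons b t => simp [wt]
  | a :: c :: t, _, l₂, h₂ => by
    have ih := wt_append (c :: t) (by simp) l₂ h₂
    have e : (a :: c :: t) ++ l₂ = a :: ((c :: t) ++ l₂) := by simp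
    rw [e]
    have e2 : (c :: t) ++ l₂ = c :: (t ++ l₂) := by simp
    rw [e2] at ih
    have hg : (a :: c :: t).getLast (by simp) = (c :: t).getLast (by simp) :=
      List.getLast_cons (by simp)
    show Λ a c * wt Λ (c :: (t ++ l₂)) = _
    rw [ih, hg]
    show _ = Λ a c * wt Λ (c :: t) * _ * _
    ring

/-- tail-factor: weight of `Q` seen as continuation after vertex `v`. -/
noncomputable def ext (v : Fin n) (Q : List (Fin n)) : ℝ :=
  if h : Q = [] then 1 else Λ v (Q.head h) * wt Λ Q

lemma wt_append_last (P Q : List (Fin n)) (hP : P ≠ []) {v : Fin n}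
    (hPv : P.getLast hP = v) : wt Λ (P ++ Q) = wt Λ P * ext Λ v Q := by
  rcases eq_or_ne Q [] with rfl | hQ
  · simp [ext]
  · rw [wt_append Λ P hP Q hQ, ext, dif_neg hQ, hPv]; ring

/-! ### low/high cut and glue -/

def low (S : Finset (Fin n)) (v : Fin n) : Finset (Fin n) := S.filter (· ≤ v)
def high (S : Finset (Fin n)) (v : Fin n) : Finset (Fin n) := S.filter (v < ·)

lemma disj_low_high (S T : Finset (Fin n)) (v : Fin n) : Disjoint (low S v) (high T v) := by
  rw [Finset.disjoint_left]
  intro x hx hx'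
  simp only [low, high, Finset.mem_filter] at hx hx'
  exact absurd hx'.2 (not_lt.mpr hx.2)

def glue (S T : Finset (Fin n)) (v : Fin n) : Finset (Fin n) :=
  (low S v).disjUnion (high T v) (disj_low_high S T v)

lemma mem_glue {S T : Finset (Fin n)} {v x : Fin n} :
    x ∈ glue S T v ↔ (x ∈ S ∧ x ≤ v) ∨ (x ∈ T ∧ v < x) := by
  simp [glue, low, high, Finset.mem_disjUnion]

lemma sorted_lowhigh (S T : Finset (Fin n)) (v : Fin n) :
    ((low S v).sort (· ≤ ·) ++ (high T v).sort (· ≤ ·)).Pairwise (· ≤ ·) := by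
  rw [List.pairwise_append]
  refine ⟨Finset.pairwise_sort _ _, Finset.pairwise_sort _ _, ?_⟩
  intro x hx y hy
  rw [Finset.mem_sort] at hx hy
  simp only [low, high, Finset.mem_filter] at hx hy
  exact le_of_lt (lt_of_le_of_lt hx.2 hy.2)

lemma sort_glue (S T : Finset (Fin n)) (v : Fin n) :
    (glue S T v).sort (· ≤ ·) = (low S v).sort (· ≤ ·) ++ (high T v).sort (· ≤ ·) := by
  refine sort_eq_of (sorted_lowhigh S T v) ?_
  rw [← Multiset.coe_add, Finset.sort_eq, Finset.sort_eq]
  rfl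

lemma low_union_high (S : Finset (Fin n)) (v : Fin n) : glue S S v = S := by
  ext x
  rw [mem_glue]
  constructor
  · rintro (⟨h, _⟩ | ⟨h, _⟩) <;> exact h
  · intro h
    rcases le_or_gt x v with h' | h'
    · exact Or.inl ⟨h, h'⟩
    · exact Or.inr ⟨h, h'⟩

lemma sort_split (S : Finset (Fin n)) (v : Fin n) :
    S.sort (· ≤ ·) = (low S v).sort (· ≤ ·) ++ (high S v).sort (· ≤ ·) := by
  conv_lhs => rw [← low_union_high S v]
  exact sort_glue S S v

lemma sort_low_ne_nil {S : Finset (Fin n)} {v : Fin n} (hv : v ∈ S) :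
    (low S v).sort (· ≤ ·) ≠ [] := by
  have : v ∈ (low S v).sort (· ≤ ·) := by
    rw [Finset.mem_sort]; exact Finset.mem_filter.mpr ⟨hv, le_refl v⟩
  intro h; rw [h] at this; simp at this

lemma getLast_sort_low {S : Finset (Fin n)} {v : Fin n} (hv : v ∈ S) (h) :
    ((low S v).sort (· ≤ ·)).getLast h = v := by
  have hvl : v ∈ (low S v).sort (· ≤ ·) := by
    rw [Finset.mem_sort]; exact Finset.mem_filter.mpr ⟨hv, le_refl v⟩
  have h1 : v ≤ ((low S v).sort (· ≤ ·)).getLast h :=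
    le_getLast_of_sorted (Finset.pairwise_sort _ _) hvl h
  have h2 : ((low S v).sort (· ≤ ·)).getLast h ≤ v := by
    have := List.getLast_mem h
    rw [Finset.mem_sort] at this
    exact (Finset.mem_filter.mp this).2
  exact le_antisymm h2 h1

lemma getLast?_sort_low {S : Finset (Fin n)} {v : Fin n} (hv : v ∈ S) :
    ((low S v).sort (· ≤ ·)).getLast? = some v := by
  rw [List.getLast?_eq_getLast (sort_low_ne_nil hv), getLast_sort_low hv]

lemma low_glue (S T : Finset (Fin n)) (v : Fin n) : low (glue S T v) v = low S v := by
  ext x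
  simp only [low, Finset.mem_filter, mem_glue]
  constructor
  · rintro ⟨⟨h, _⟩ | ⟨h, hv⟩, hx⟩
    · exact ⟨h, hx⟩
    · exact absurd hv (not_lt.mpr hx)
  · rintro ⟨h, hx⟩
    exact ⟨Or.inl ⟨h, hx⟩, hx⟩

lemma high_glue (S T : Finset (Fin n)) (v : Fin n) : high (glue S T v) v = high T v := by
  ext x
  simp only [high, Finset.mem_filter, mem_glue]
  constructor
  · rintro ⟨⟨_, hle⟩ | ⟨h, _⟩, hx⟩
    · exact absurd hx (not_lt.mpr hle)
    · exact ⟨h, hx⟩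
  · rintro ⟨h, hx⟩
    exact ⟨Or.inr ⟨h, hx⟩, hx⟩

lemma glue_eq_union (S T : Finset (Fin n)) (v : Fin n) :
    glue S T v = low S v ∪ high T v := Finset.disjUnion_eq_union _ _ _

lemma glue_glue (S T : Finset (Fin n)) (v : Fin n) :
    glue (glue S T v) (glue T S v) v = S := by
  have h : glue (glue S T v) (glue T S v) v = low S v ∪ high S v := by
    rw [glue_eq_union, low_glue, high_glue]
  rw [h, ← glue_eq_union, low_union_high]

lemma glue_weight {S T : Finset (Fin n)} {v : Fin n}
    (hvS : v ∈ S) (hvT : v ∈ T) :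
    wt Λ ((glue S T v).sort (· ≤ ·)) * wt Λ ((glue T S v).sort (· ≤ ·)) =
      wt Λ (S.sort (· ≤ ·)) * wt Λ (T.sort (· ≤ ·)) := by
  rw [sort_glue, sort_glue, sort_split S v, sort_split T v,
    wt_append_last Λ _ _ (sort_low_ne_nil hvS) (getLast_sort_low hvS _),
    wt_append_last Λ _ _ (sort_low_ne_nil hvT) (getLast_sort_low hvT _),
    wt_append_last Λ _ _ (sort_low_ne_nil hvS) (getLast_sort_low hvS _),
    wt_append_last Λ _ _ (sort_low_ne_nil hvT) (getLast_sort_low hvT _)]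
  ring

/-! ### basic path facts -/

variable {E : Fin n → Fin n → Prop} {S T : Finset (Fin n)} {x y x' y' v : Fin n}

lemma path_sort_ne_nil (h : IsPathSet E S x y) : S.sort (· ≤ ·) ≠ [] := by
  intro h'
  have := h.2.1
  rw [h'] at this
  simp at this

lemma path_mem_left (h : IsPathSet E S x y) : x ∈ S := by
  have := h.2.1
  rw [← Finset.mem_sort (α := Fin n) (· ≤ ·)]
  exact List.mem_of_mem_head? (by rw [this]; rfl)

lemma path_mem_right (h : IsPathSet E S x y) : y ∈ S := by
  have := h.2.2
  rw [← Finset.mem_sort (α := Fin n) (· ≤ ·)]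
  exact List.mem_of_mem_getLast? (by rw [this]; rfl)

lemma path_head (h : IsPathSet E S x y) :
    (S.sort (· ≤ ·)).head (path_sort_ne_nil h) = x := by
  have := h.2.1
  rwa [List.head?_eq_head (path_sort_ne_nil h), Option.some.injEq] at this

lemma path_getLast (h : IsPathSet E S x y) :
    (S.sort (· ≤ ·)).getLast (path_sort_ne_nil h) = y := by
  have := h.2.2
  rwa [List.getLast?_eq_getLast (path_sort_ne_nil h), Option.some.injEq] at this

lemma path_min (h : IsPathSet E S x y) {z : Fin n} (hz : z ∈ S) : x ≤ z := by
  have := sorted_head_le (Finset.pairwise_sort S (· ≤ ·))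
    ((Finset.mem_sort _).mpr hz) (path_sort_ne_nil h)
  rwa [path_head h] at this

lemma path_max (h : IsPathSet E S x y) {z : Fin n} (hz : z ∈ S) : z ≤ y := by
  have := le_getLast_of_sorted (Finset.pairwise_sort S (· ≤ ·))
    ((Finset.mem_sort _).mpr hz) (path_sort_ne_nil h)
  rwa [path_getLast h] at this

lemma path_singleton (i j : Fin n) : IsPathSet E {i} i j ↔ i = j := by
  constructor
  · intro h
    have := h.2.2
    rw [Finset.sort_singleton] at this
    have h2 : i = j := by simpa using this
    exact h2
  · rintro rfl
    refine ⟨?_, ?_, ?_⟩ <;> rw [Finset.sort_singleton] <;> simp [List.Chain']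

lemma glue_path (hS : IsPathSet E S x y) (hT : IsPathSet E T x' y')
    (hvS : v ∈ S) (hvT : v ∈ T) :
    IsPathSet E (glue S T v) x y' := by
  obtain ⟨hc, hh, hl⟩ := hS
  obtain ⟨hc', hh', hl'⟩ := hT
  rw [sort_split S v] at hc hh hl
  rw [sort_split T v] at hc' hh' hl'
  rw [List.Chain', List.isChain_append] at hc hc'
  refine ⟨?_, ?_, ?_⟩ <;> rw [sort_glue]
  · rw [List.Chain', List.isChain_append]
    refine ⟨hc.1, hc'.2.1, ?_⟩
    intro p hp q hq
    rw [getLast?_sort_low hvS, Option.mem_def, Option.some.injEq] at hp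
    subst hp
    refine hc'.2.2 v ?_ q hq
    rw [getLast?_sort_low hvT]; rfl
  · rw [List.head?_append_of_ne_nil _ (sort_low_ne_nil hvS)]
    rw [List.head?_append_of_ne_nil _ (sort_low_ne_nil hvS)] at hh
    exact hh
  · rcases eq_or_ne ((high T v).sort (· ≤ ·)) [] with he | he
    · rw [he, List.append_nil] at hl' ⊢
      rw [getLast?_sort_low hvT] at hl'
      rw [getLast?_sort_low hvS, hl']
    · rw [List.getLast?_append_of_ne_nil _ he] at hl' ⊢
      exact hl'

lemma glue_pathWeight {S T : Finset (Fin n)} {v : Fin n}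
    (hvS : v ∈ S) (hvT : v ∈ T) :
    pathWeight Λ (glue S T v) * pathWeight Λ (glue T S v) =
      pathWeight Λ S * pathWeight Λ T := by
  rw [pathWeight_eq, pathWeight_eq, pathWeight_eq, pathWeight_eq]
  exact glue_weight Λ hvS hvT

end GVL

namespace GVL

variable {n : ℕ}

section Inverse

variable (E : Fin n → Fin n → Prop) [DecidableRel E]

lemma pathWeight_singleton (Λ : Matrix (Fin n) (Fin n) ℝ) (i : Fin n) :
    pathWeight Λ {i} = 1 := by
  rw [pathWeight, Finset.sort_singleton]
  simp

lemma sort_erase_of_path {E : Fin n → Fin n → Prop} {S : Finset (Fin n)} {i j : Fin n}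
    (h : IsPathSet E S i j) : S.sort (· ≤ ·) = i :: (S.erase i).sort (· ≤ ·) := by
  refine sort_eq_of ?_ ?_
  · rw [List.pairwise_cons]
    refine ⟨?_, Finset.pairwise_sort _ _⟩
    intro b hb
    rw [Finset.mem_sort] at hb
    exact path_min h (Finset.mem_of_mem_erase hb)
  · rw [← Multiset.cons_coe, Finset.sort_eq, Finset.erase_val, Multiset.cons_erase]
    rw [← Finset.mem_def]
    exact path_mem_left h

lemma sort_insert_of_lt {T : Finset (Fin n)} {i : Fin n}
    (hlt : ∀ x ∈ T, i < x) : (insert i T).sort (· ≤ ·) = i :: T.sort (· ≤ ·) := by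
  have hiT : i ∉ T := fun h => lt_irrefl i (hlt i h)
  refine sort_eq_of ?_ ?_
  · rw [List.pairwise_cons]
    refine ⟨?_, Finset.pairwise_sort _ _⟩
    intro b hb
    rw [Finset.mem_sort] at hb
    exact le_of_lt (hlt b hb)
  · rw [← Multiset.cons_coe, Finset.sort_eq, Finset.insert_val,
      Multiset.ndinsert_of_notMem hiT]

lemma singleton_of_erase_sort_nil {S : Finset (Fin n)} {i : Fin n} (hiS : i ∈ S)
    (h : (S.erase i).sort (· ≤ ·) = []) : S = {i} := by
  have h0 := eq_empty_of_sort_eq_nil h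
  rcases (Finset.erase_eq_empty_iff S i).mp h0 with h1 | h1
  · exact absurd (h1 ▸ hiS) (Finset.notMem_empty i)
  · exact h1

lemma key_entry (hE : ∀ a b : Fin n, E a b → a < b)
    {Λ : Matrix (Fin n) (Fin n) ℝ} (hΛ : ∀ a b : Fin n, ¬E a b → Λ a b = 0)
    (i j : Fin n) :
    (∑ S : Finset (Fin n), if IsPathSet E S i j then pathWeight Λ S else 0) =
      (if i = j then (1:ℝ) else 0) +
        ∑ v : Fin n, Λ i v *
          ∑ T : Finset (Fin n), if IsPathSet E T v j then pathWeight Λ T else 0 := by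
  have hrhs : (∑ v : Fin n, Λ i v *
      ∑ T : Finset (Fin n), if IsPathSet E T v j then pathWeight Λ T else 0)
      = ∑ p ∈ Finset.univ.filter
          (fun p : Fin n × Finset (Fin n) => E i p.1 ∧ IsPathSet E p.2 p.1 j),
          Λ i p.1 * pathWeight Λ p.2 := by
    rw [Finset.sum_filter, Fintype.sum_prod_type]
    refine Finset.sum_congr rfl fun v _ => ?_
    rw [Finset.mul_sum]
    refine Finset.sum_congr rfl fun T _ => ?_
    by_cases hP : IsPathSet E T v j
    · by_cases hEg : E i v
      · rw [if_pos hP, if_pos ⟨hEg, hP⟩]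
      · rw [if_pos hP, if_neg (fun hc => hEg hc.1), hΛ _ _ hEg, zero_mul]
    · rw [if_neg hP, if_neg (fun hc => hP hc.2), mul_zero]
  rw [hrhs]
  rw [← Finset.add_sum_erase Finset.univ _ (Finset.mem_univ ({i} : Finset (Fin n)))]
  have hsing : (if IsPathSet E ({i} : Finset (Fin n)) i j then pathWeight Λ {i} else 0)
      = (if i = j then (1:ℝ) else 0) := by
    by_cases hij : i = j
    · rw [if_pos ((path_singleton i j).mpr hij), pathWeight_singleton, if_pos hij]
    · rw [if_neg (fun hc => hij ((path_singleton i j).mp hc)), if_neg hij]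
  rw [hsing]
  congr 1
  rw [← Finset.sum_filter]
  refine Finset.sum_nbij'
    (i := fun S => ((((S.erase i).sort (· ≤ ·)).head?).getD i, S.erase i))
    (j := fun p => insert i p.2) ?_ ?_ ?_ ?_ ?_
  · -- forward maps into target
    intro S hS
    simp only [Finset.mem_filter, Finset.mem_erase] at hS
    obtain ⟨⟨hSne, _⟩, hP⟩ := hS
    have hiS : i ∈ S := path_mem_left hP
    have hsort := sort_erase_of_path hP
    have hTne : (S.erase i).sort (· ≤ ·) ≠ [] :=
      fun hnil => hSne (singleton_of_erase_sort_nil hiS hnil)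
    set v := ((S.erase i).sort (· ≤ ·)).head hTne with hv
    have hhead : ((S.erase i).sort (· ≤ ·)).head? = some v := List.head?_eq_head hTne
    have hgetd : ((((S.erase i).sort (· ≤ ·)).head?).getD i) = v := by rw [hhead]; rfl
    simp only [Finset.mem_filter, Finset.mem_univ, true_and, hgetd]
    obtain ⟨hc, hh, hl⟩ := hP
    rw [hsort, List.Chain', List.isChain_cons] at hc
    rw [hsort, ← List.singleton_append, List.getLast?_append_of_ne_nil _ hTne] at hl
    exact ⟨hc.1 v hhead, hc.2, hhead, hl⟩
  · -- backward maps into source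
    intro p hp
    simp only [Finset.mem_filter, Finset.mem_univ, true_and] at hp
    obtain ⟨hEiv, hP⟩ := hp
    have hvT : p.1 ∈ p.2 := path_mem_left hP
    have hlt : ∀ x ∈ p.2, i < x := fun x hx => lt_of_lt_of_le (hE _ _ hEiv) (path_min hP hx)
    have hsort := sort_insert_of_lt (T := p.2) (i := i) hlt
    have hTne : p.2.sort (· ≤ ·) ≠ [] := path_sort_ne_nil hP
    simp only [Finset.mem_filter, Finset.mem_erase, Finset.mem_univ, true_and, and_true]
    refine ⟨?_, ?_, ?_, ?_⟩
    · intro hins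
      have h2 : p.1 ∈ ({i} : Finset (Fin n)) := hins ▸ Finset.mem_insert_of_mem hvT
      rw [Finset.mem_singleton] at h2
      exact lt_irrefl i (h2 ▸ hlt p.1 hvT)
    · rw [hsort, List.Chain', List.isChain_cons]
      refine ⟨?_, hP.1⟩
      intro y hy
      rw [hP.2.1] at hy
      obtain rfl : p.1 = y := by simpa using hy
      exact hEiv
    · rw [hsort]; rfl
    · rw [hsort, ← List.singleton_append, List.getLast?_append_of_ne_nil _ hTne]
      exact hP.2.2
  · -- left inverse
    intro S hS
    simp only [Finset.mem_filter, Finset.mem_erase] at hS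
    exact Finset.insert_erase (path_mem_left hS.2)
  · -- right inverse
    intro p hp
    simp only [Finset.mem_filter, Finset.mem_univ, true_and] at hp
    obtain ⟨hEiv, hP⟩ := hp
    have hlt : ∀ x ∈ p.2, i < x :=
      fun x hx => lt_of_lt_of_le (hE _ _ hEiv) (path_min hP hx)
    have hiT : i ∉ p.2 := fun h => lt_irrefl i (hlt i h)
    have her : (insert i p.2).erase i = p.2 := Finset.erase_insert hiT
    rw [her, hP.2.1]
    rfl
  · -- values agree
    intro S hS
    simp only [Finset.mem_filter, Finset.mem_erase] at hS
    obtain ⟨⟨hSne, _⟩, hP⟩ := hS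
    have hiS : i ∈ S := path_mem_left hP
    have hsort := sort_erase_of_path hP
    have hTne : (S.erase i).sort (· ≤ ·) ≠ [] :=
      fun hnil => hSne (singleton_of_erase_sort_nil hiS hnil)
    set v := ((S.erase i).sort (· ≤ ·)).head hTne with hv
    have hhead : ((S.erase i).sort (· ≤ ·)).head? = some v := List.head?_eq_head hTne
    have hgetd : ((((S.erase i).sort (· ≤ ·)).head?).getD i) = v := by rw [hhead]; rfl
    have htail : (S.erase i).sort (· ≤ ·) = v :: ((S.erase i).sort (· ≤ ·)).tail :=
      (List.cons_head_tail hTne).symm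
    dsimp only
    rw [pathWeight_eq, pathWeight_eq, hsort, hgetd]
    conv_lhs => rw [htail]
    show Λ i v * wt Λ (v :: _) = _
    rw [← htail]

lemma inv_eq_pathSum (hE : ∀ a b : Fin n, E a b → a < b)
    {Λ : Matrix (Fin n) (Fin n) ℝ} (hΛ : ∀ a b : Fin n, ¬E a b → Λ a b = 0) :
    (1 - Λ)⁻¹ = Matrix.of (fun i j =>
      ∑ S : Finset (Fin n), if IsPathSet E S i j then pathWeight Λ S else 0) := by
  apply Matrix.inv_eq_right_inv
  ext i j
  rw [Matrix.sub_mul, Matrix.one_mul, Matrix.sub_apply, Matrix.mul_apply, Matrix.one_apply]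
  have key := key_entry E hE hΛ i j
  simp only [Matrix.of_apply]
  rw [key]
  ring

end Inverse
end GVL

namespace GVL

variable {n ℓ : ℕ}

section Involution

def sharedSet (f : Fin ℓ → Finset (Fin n)) : Finset (Fin n) :=
  Finset.univ.filter fun x => ∃ a b : Fin ℓ, a ≠ b ∧ x ∈ f a ∧ x ∈ f b

lemma mem_sharedSet {f : Fin ℓ → Finset (Fin n)} {x : Fin n} :
    x ∈ sharedSet f ↔ ∃ a b : Fin ℓ, a ≠ b ∧ x ∈ f a ∧ x ∈ f b := by
  simp [sharedSet]

lemma sharedSet_nonempty_of {f : Fin ℓ → Finset (Fin n)}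
    (h : ¬ ∀ a b : Fin ℓ, a ≠ b → Disjoint (f a) (f b)) : (sharedSet f).Nonempty := by
  push_neg at h
  obtain ⟨a, b, hab, hd⟩ := h
  obtain ⟨x, hxa, hxb⟩ := Finset.not_disjoint_iff.mp hd
  exact ⟨x, mem_sharedSet.mpr ⟨a, b, hab, hxa, hxb⟩⟩

variable (f : Fin ℓ → Finset (Fin n))

def minShared (h : (sharedSet f).Nonempty) : Fin n := (sharedSet f).min' h

def idxSet (h : (sharedSet f).Nonempty) : Finset (Fin ℓ) :=
  Finset.univ.filter fun a => minShared f h ∈ f a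

lemma mem_idxSet {h : (sharedSet f).Nonempty} {c : Fin ℓ} :
    c ∈ idxSet f h ↔ minShared f h ∈ f c := by simp [idxSet]

lemma idxSet_card (h : (sharedSet f).Nonempty) : 1 < (idxSet f h).card := by
  obtain ⟨a, b, hab, hxa, hxb⟩ := mem_sharedSet.mp ((sharedSet f).min'_mem h)
  exact Finset.one_lt_card.mpr ⟨a, (mem_idxSet _).mpr hxa, b, (mem_idxSet _).mpr hxb, hab⟩

lemma idxSet_nonempty (h : (sharedSet f).Nonempty) : (idxSet f h).Nonempty :=
  Finset.card_pos.mp (lt_trans zero_lt_one (idxSet_card f h))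

def ia (h : (sharedSet f).Nonempty) : Fin ℓ := (idxSet f h).min' (idxSet_nonempty f h)

lemma ia_mem (h : (sharedSet f).Nonempty) : ia f h ∈ idxSet f h :=
  Finset.min'_mem _ _

lemma erase_ia_nonempty (h : (sharedSet f).Nonempty) :
    ((idxSet f h).erase (ia f h)).Nonempty := by
  rw [← Finset.card_pos, Finset.card_erase_of_mem (ia_mem f h)]
  have := idxSet_card f h
  omega

def ib (h : (sharedSet f).Nonempty) : Fin ℓ :=
  ((idxSet f h).erase (ia f h)).min' (erase_ia_nonempty f h)

lemma ib_mem (h : (sharedSet f).Nonempty) : ib f h ∈ idxSet f h :=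
  Finset.mem_of_mem_erase (Finset.min'_mem _ _)

lemma ib_ne_ia (h : (sharedSet f).Nonempty) : ib f h ≠ ia f h :=
  Finset.ne_of_mem_erase (Finset.min'_mem _ _)

lemma v_mem_ia (h : (sharedSet f).Nonempty) : minShared f h ∈ f (ia f h) :=
  (mem_idxSet _).mp (ia_mem f h)

lemma v_mem_ib (h : (sharedSet f).Nonempty) : minShared f h ∈ f (ib f h) :=
  (mem_idxSet _).mp (ib_mem f h)

def swapf (h : (sharedSet f).Nonempty) : Fin ℓ → Finset (Fin n) := fun c =>
  if c = ia f h then glue (f (ia f h)) (f (ib f h)) (minShared f h)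
  else if c = ib f h then glue (f (ib f h)) (f (ia f h)) (minShared f h)
  else f c

lemma mem_swapf_of_le {h : (sharedSet f).Nonempty} {x : Fin n}
    (hx : x ≤ minShared f h) (c : Fin ℓ) : x ∈ swapf f h c ↔ x ∈ f c := by
  unfold swapf
  by_cases hc : c = ia f h
  · subst hc
    rw [if_pos rfl, mem_glue]
    constructor
    · rintro (⟨h1, _⟩ | ⟨_, h2⟩)
      · exact h1
      · exact absurd h2 (not_lt.mpr hx)
    · intro h1
      exact Or.inl ⟨h1, hx⟩
  · rw [if_neg hc]
    by_cases hc' : c = ib f h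
    · subst hc'
      rw [if_pos rfl, mem_glue]
      constructor
      · rintro (⟨h1, _⟩ | ⟨_, h2⟩)
        · exact h1
        · exact absurd h2 (not_lt.mpr hx)
      · intro h1
        exact Or.inl ⟨h1, hx⟩
    · rw [if_neg hc']

lemma swapf_nonempty (h : (sharedSet f).Nonempty) : (sharedSet (swapf f h)).Nonempty := by
  refine ⟨minShared f h, mem_sharedSet.mpr ⟨ia f h, ib f h, (ib_ne_ia f h).symm, ?_, ?_⟩⟩
  · exact (mem_swapf_of_le f le_rfl _).mpr (v_mem_ia f h)
  · exact (mem_swapf_of_le f le_rfl _).mpr (v_mem_ib f h)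

lemma minShared_swapf (h : (sharedSet f).Nonempty) (h' : (sharedSet (swapf f h)).Nonempty) :
    minShared (swapf f h) h' = minShared f h := by
  refine le_antisymm (Finset.min'_le _ _ ?_) (Finset.le_min' _ _ _ ?_)
  · exact mem_sharedSet.mpr ⟨ia f h, ib f h, (ib_ne_ia f h).symm,
      (mem_swapf_of_le f le_rfl _).mpr (v_mem_ia f h),
      (mem_swapf_of_le f le_rfl _).mpr (v_mem_ib f h)⟩
  · intro y hy
    by_contra hlt
    push_neg at hlt
    obtain ⟨a, b, hab, hya, hyb⟩ := mem_sharedSet.mp hy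
    rw [mem_swapf_of_le f (le_of_lt hlt)] at hya hyb
    have : y ∈ sharedSet f := mem_sharedSet.mpr ⟨a, b, hab, hya, hyb⟩
    exact absurd (Finset.min'_le _ _ this) (not_le.mpr hlt)

lemma idxSet_swapf (h : (sharedSet f).Nonempty) (h' : (sharedSet (swapf f h)).Nonempty) :
    idxSet (swapf f h) h' = idxSet f h := by
  ext c
  rw [mem_idxSet, mem_idxSet, minShared_swapf f h h', mem_swapf_of_le f le_rfl]

lemma ia_swapf (h : (sharedSet f).Nonempty) (h' : (sharedSet (swapf f h)).Nonempty) :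
    ia (swapf f h) h' = ia f h := by
  unfold ia
  congr 1
  exact idxSet_swapf f h h'

lemma ib_swapf (h : (sharedSet f).Nonempty) (h' : (sharedSet (swapf f h)).Nonempty) :
    ib (swapf f h) h' = ib f h := by
  unfold ib
  have h1 := idxSet_swapf f h h'
  have h2 := ia_swapf f h h'
  congr 1
  rw [h1, h2]

lemma swapf_swapf (h : (sharedSet f).Nonempty) (h' : (sharedSet (swapf f h)).Nonempty) :
    swapf (swapf f h) h' = f := by
  funext c
  have hv := minShared_swapf f h h'
  have ha := ia_swapf f h h'
  have hb := ib_swapf f h h'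
  have hne := ib_ne_ia f h
  show (if c = ia (swapf f h) h' then _ else if c = ib (swapf f h) h' then _ else _) = f c
  rw [ha, hb, hv]
  by_cases hc : c = ia f h
  · subst hc
    rw [if_pos rfl]
    show glue (swapf f h (ia f h)) (swapf f h (ib f h)) _ = _
    unfold swapf
    rw [if_pos rfl, if_neg (ib_ne_ia f h), if_pos rfl, glue_glue]
  · rw [if_neg hc]
    by_cases hc' : c = ib f h
    · subst hc'
      rw [if_pos rfl]
      show glue (swapf f h (ib f h)) (swapf f h (ia f h)) _ = _
      unfold swapf
      rw [if_pos rfl, if_neg (ib_ne_ia f h), if_pos rfl, glue_glue]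
    · rw [if_neg hc']
      show (if c = ia f h then _ else if c = ib f h then _ else f c) = f c
      rw [if_neg hc, if_neg hc']

end Involution
end GVL

namespace GVL

variable {n ℓ : ℕ}

lemma ite_split (P Q : Prop) [Decidable P] [Decidable Q] (x : ℝ) :
    (if P then x else 0) = (if P ∧ Q then x else 0) + (if P ∧ ¬Q then x else 0) := by
  by_cases hP : P <;> by_cases hQ : Q <;> simp [hP, hQ]

lemma prod_ite_zero {κ : Type*} [Fintype κ] (P : κ → Prop) [DecidablePred P] (w : κ → ℝ) :
    (∏ a : κ, if P a then w a else 0) = if (∀ a, P a) then ∏ a : κ, w a else 0 := by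
  by_cases h : ∀ a, P a
  · rw [if_pos h]
    exact Finset.prod_congr rfl fun a _ => if_pos (h a)
  · rw [if_neg h]
    push_neg at h
    obtain ⟨a, ha⟩ := h
    exact Finset.prod_eq_zero (Finset.mem_univ a) (if_neg ha)

section Main

variable (E : Fin n → Fin n → Prop) [DecidableRel E]
variable (Λ : Matrix (Fin n) (Fin n) ℝ)

lemma prod_swapf (f : Fin ℓ → Finset (Fin n)) (h : (sharedSet f).Nonempty) :
    ∏ a : Fin ℓ, pathWeight Λ (swapf f h a) = ∏ a : Fin ℓ, pathWeight Λ (f a) := by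
  have hba : ib f h ≠ ia f h := ib_ne_ia f h
  have hmem_b : ib f h ∈ Finset.univ.erase (ia f h) :=
    Finset.mem_erase.mpr ⟨hba, Finset.mem_univ _⟩
  rw [← Finset.mul_prod_erase Finset.univ _ (Finset.mem_univ (ia f h)),
      ← Finset.mul_prod_erase _ _ hmem_b,
      ← Finset.mul_prod_erase Finset.univ (fun c => pathWeight Λ (f c))
        (Finset.mem_univ (ia f h)),
      ← Finset.mul_prod_erase _ (fun c => pathWeight Λ (f c)) hmem_b]
  have hrest : ∏ c ∈ (Finset.univ.erase (ia f h)).erase (ib f h),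
      pathWeight Λ (swapf f h c)
      = ∏ c ∈ (Finset.univ.erase (ia f h)).erase (ib f h), pathWeight Λ (f c) := by
    refine Finset.prod_congr rfl fun c hc => ?_
    obtain ⟨hcb, hca, _⟩ :
        c ≠ ib f h ∧ c ≠ ia f h ∧ c ∈ Finset.univ := by
      have h1 := Finset.mem_erase.mp hc
      have h2 := Finset.mem_erase.mp h1.2
      exact ⟨h1.1, h2.1, h2.2⟩
    unfold swapf
    rw [if_neg hca, if_neg hcb]
  rw [hrest, ← mul_assoc, ← mul_assoc]
  congr 1
  have h1 : swapf f h (ia f h) = glue (f (ia f h)) (f (ib f h)) (minShared f h) := by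
    unfold swapf; rw [if_pos rfl]
  have h2 : swapf f h (ib f h) = glue (f (ib f h)) (f (ia f h)) (minShared f h) := by
    unfold swapf; rw [if_neg hba, if_pos rfl]
  rw [h1, h2, glue_pathWeight Λ (v_mem_ia f h) (v_mem_ib f h)]

variable {E}

lemma swapf_paths {A B : Fin ℓ → Fin n} {σ : Equiv.Perm (Fin ℓ)}
    {f : Fin ℓ → Finset (Fin n)}
    (hp : ∀ a, IsPathSet E (f a) (A a) (B (σ a))) (h : (sharedSet f).Nonempty) :
    ∀ c, IsPathSet E (swapf f h c) (A c)
      (B ((σ * Equiv.swap (ia f h) (ib f h)) c)) := by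
  intro c
  have hne : ia f h ≠ ib f h := (ib_ne_ia f h).symm
  by_cases hc : c = ia f h
  · subst hc
    have e1 : swapf f h (ia f h) = glue (f (ia f h)) (f (ib f h)) (minShared f h) := by
      unfold swapf; rw [if_pos rfl]
    have e2 : (σ * Equiv.swap (ia f h) (ib f h)) (ia f h) = σ (ib f h) := by
      rw [Equiv.Perm.mul_apply, Equiv.swap_apply_left]
    rw [e1, e2]
    exact glue_path (hp _) (hp _) (v_mem_ia f h) (v_mem_ib f h)
  · by_cases hc' : c = ib f h
    · subst hc'
      have e1 : swapf f h (ib f h) = glue (f (ib f h)) (f (ia f h)) (minShared f h) := by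
        unfold swapf; rw [if_neg (ib_ne_ia f h), if_pos rfl]
      have e2 : (σ * Equiv.swap (ia f h) (ib f h)) (ib f h) = σ (ia f h) := by
        rw [Equiv.Perm.mul_apply, Equiv.swap_apply_right]
      rw [e1, e2]
      exact glue_path (hp _) (hp _) (v_mem_ib f h) (v_mem_ia f h)
    · have e1 : swapf f h c = f c := by
        unfold swapf; rw [if_neg hc, if_neg hc']
      have e2 : (σ * Equiv.swap (ia f h) (ib f h)) c = σ c := by
        rw [Equiv.Perm.mul_apply, Equiv.swap_apply_of_ne_of_ne hc hc']
      rw [e1, e2]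
      exact hp c

variable (E)

lemma involution_sum (A B : Fin ℓ → Fin n) :
    (∑ p : Equiv.Perm (Fin ℓ) × (Fin ℓ → Finset (Fin n)),
      if (∀ a, IsPathSet E (p.2 a) (A a) (B (p.1 a))) ∧
          ¬(∀ a b : Fin ℓ, a ≠ b → Disjoint (p.2 a) (p.2 b)) then
        ((Equiv.Perm.sign p.1 : ℤ) : ℝ) * ∏ a : Fin ℓ, pathWeight Λ (p.2 a)
      else 0) = 0 := by
  rw [← Finset.sum_filter]
  have hmem : ∀ p ∈ Finset.univ.filter
      (fun p : Equiv.Perm (Fin ℓ) × (Fin ℓ → Finset (Fin n)) =>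
        (∀ a, IsPathSet E (p.2 a) (A a) (B (p.1 a))) ∧
          ¬(∀ a b : Fin ℓ, a ≠ b → Disjoint (p.2 a) (p.2 b))),
      (∀ a, IsPathSet E (p.2 a) (A a) (B (p.1 a))) ∧
      ¬(∀ a b : Fin ℓ, a ≠ b → Disjoint (p.2 a) (p.2 b)) := by
    intro p hp
    exact (Finset.mem_filter.mp hp).2
  refine Finset.sum_involution
    (fun p hp =>
      (p.1 * Equiv.swap (ia p.2 (sharedSet_nonempty_of (hmem p hp).2))
        (ib p.2 (sharedSet_nonempty_of (hmem p hp).2)),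
       swapf p.2 (sharedSet_nonempty_of (hmem p hp).2)))
    ?_ ?_ ?_ ?_
  · -- sums to zero
    intro p hp
    set h := sharedSet_nonempty_of (hmem p hp).2
    have hsign : ((Equiv.Perm.sign (p.1 * Equiv.swap (ia p.2 h) (ib p.2 h)) : ℤ) : ℝ)
        = -((Equiv.Perm.sign p.1 : ℤ) : ℝ) := by
      rw [Equiv.Perm.sign_mul, Equiv.Perm.sign_swap (ib_ne_ia p.2 h).symm]
      push_cast
      ring
    show ((Equiv.Perm.sign p.1 : ℤ) : ℝ) * ∏ a : Fin ℓ, pathWeight Λ (p.2 a) +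
      ((Equiv.Perm.sign _ : ℤ) : ℝ) * ∏ a : Fin ℓ, pathWeight Λ (swapf p.2 h a) = 0
    rw [hsign, prod_swapf Λ p.2 h]
    ring
  · -- not fixed
    intro p hp _
    set h := sharedSet_nonempty_of (hmem p hp).2
    intro heq
    have h1 : p.1 * Equiv.swap (ia p.2 h) (ib p.2 h) = p.1 := congrArg Prod.fst heq
    have h2 : Equiv.swap (ia p.2 h) (ib p.2 h) = 1 := mul_eq_left.mp h1
    exact (ib_ne_ia p.2 h) (Equiv.swap_eq_one_iff.mp h2).symm
  · -- stays in s
    intro p hp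
    set h := sharedSet_nonempty_of (hmem p hp).2
    show _ ∈ Finset.univ.filter _
    rw [Finset.mem_filter]
    refine ⟨Finset.mem_univ _, swapf_paths (hmem p hp).1 h, ?_⟩
    intro hall
    have hd := hall (ia p.2 h) (ib p.2 h) (ib_ne_ia p.2 h).symm
    rw [Finset.disjoint_left] at hd
    exact hd ((mem_swapf_of_le p.2 le_rfl _).mpr (v_mem_ia p.2 h))
      ((mem_swapf_of_le p.2 le_rfl _).mpr (v_mem_ib p.2 h))
  · -- involutive
    intro p hp
    set h := sharedSet_nonempty_of (hmem p hp).2 with hh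
    have h' : (sharedSet (swapf p.2 h)).Nonempty := swapf_nonempty p.2 h
    ext1
    · show (p.1 * Equiv.swap (ia p.2 h) (ib p.2 h)) *
        Equiv.swap (ia (swapf p.2 h) _) (ib (swapf p.2 h) _) = p.1
      rw [ia_swapf p.2 h, ib_swapf p.2 h, mul_assoc, Equiv.swap_mul_self, mul_one]
    · show swapf (swapf p.2 h) _ = p.2
      exact swapf_swapf p.2 h _

lemma part1 (hE : ∀ a b : Fin n, E a b → a < b) (A B : Fin ℓ → Fin n)
    (hΛ : ∀ a b : Fin n, ¬E a b → Λ a b = 0) :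
    (((1 - Λ)⁻¹).submatrix A B).det =
      ∑ σ : Equiv.Perm (Fin ℓ), ∑ f : Fin ℓ → Finset (Fin n),
        if (∀ a : Fin ℓ, IsPathSet E (f a) (A a) (B (σ a))) ∧
            ∀ a b : Fin ℓ, a ≠ b → Disjoint (f a) (f b) then
          ((Equiv.Perm.sign σ : ℤ) : ℝ) * ∏ a : Fin ℓ, pathWeight Λ (f a)
        else 0 := by
  rw [inv_eq_pathSum E hE hΛ, Matrix.det_apply']
  rw [← Equiv.sum_comp (Equiv.inv (Equiv.Perm (Fin ℓ)))
    (fun σ => ((Equiv.Perm.sign σ : ℤ) : ℝ) *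
      ∏ i : Fin ℓ, ((Matrix.of fun i j => ∑ S : Finset (Fin n),
        if IsPathSet E S i j then pathWeight Λ S else 0).submatrix A B) (σ i) i)]
  have step : ∀ σ : Equiv.Perm (Fin ℓ),
      ((Equiv.Perm.sign (Equiv.inv (Equiv.Perm (Fin ℓ)) σ) : ℤ) : ℝ) *
        ∏ i : Fin ℓ, ((Matrix.of fun i j => ∑ S : Finset (Fin n),
          if IsPathSet E S i j then pathWeight Λ S else 0).submatrix A B)
            ((Equiv.inv (Equiv.Perm (Fin ℓ)) σ) i) i
      = ∑ f : Fin ℓ → Finset (Fin n),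
          if (∀ a : Fin ℓ, IsPathSet E (f a) (A a) (B (σ a))) then
            ((Equiv.Perm.sign σ : ℤ) : ℝ) * ∏ a : Fin ℓ, pathWeight Λ (f a)
          else 0 := by
    intro σ
    have e0 : Equiv.inv (Equiv.Perm (Fin ℓ)) σ = σ⁻¹ := rfl
    rw [e0, Equiv.Perm.sign_inv]
    have e1 : ∏ i : Fin ℓ, ((Matrix.of fun i j => ∑ S : Finset (Fin n),
        if IsPathSet E S i j then pathWeight Λ S else 0).submatrix A B) (σ⁻¹ i) i
        = ∏ a : Fin ℓ, ∑ S : Finset (Fin n),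
            if IsPathSet E S (A a) (B (σ a)) then pathWeight Λ S else 0 := by
      rw [← Equiv.prod_comp σ (fun i => ((Matrix.of fun i j => ∑ S : Finset (Fin n),
        if IsPathSet E S i j then pathWeight Λ S else 0).submatrix A B) (σ⁻¹ i) i)]
      refine Finset.prod_congr rfl fun a _ => ?_
      rw [Matrix.submatrix_apply, Matrix.of_apply, show σ⁻¹ (σ a) = a from σ.symm_apply_apply a]
    rw [e1, Finset.prod_univ_sum, Fintype.piFinset_univ]
    rw [Finset.mul_sum]
    refine Finset.sum_congr rfl fun f _ => ?_
    rw [prod_ite_zero, mul_ite, mul_zero]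
    congr
  rw [Finset.sum_congr rfl (fun σ _ => step σ)]
  have decomp : ∀ σ : Equiv.Perm (Fin ℓ), ∀ f : Fin ℓ → Finset (Fin n),
      (if (∀ a : Fin ℓ, IsPathSet E (f a) (A a) (B (σ a))) then
        ((Equiv.Perm.sign σ : ℤ) : ℝ) * ∏ a : Fin ℓ, pathWeight Λ (f a) else 0)
      = (if (∀ a : Fin ℓ, IsPathSet E (f a) (A a) (B (σ a))) ∧
            (∀ a b : Fin ℓ, a ≠ b → Disjoint (f a) (f b)) then
          ((Equiv.Perm.sign σ : ℤ) : ℝ) * ∏ a : Fin ℓ, pathWeight Λ (f a) else 0)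
        + (if (∀ a : Fin ℓ, IsPathSet E (f a) (A a) (B (σ a))) ∧
            ¬(∀ a b : Fin ℓ, a ≠ b → Disjoint (f a) (f b)) then
          ((Equiv.Perm.sign σ : ℤ) : ℝ) * ∏ a : Fin ℓ, pathWeight Λ (f a) else 0) :=
    fun σ f => ite_split _ _ _
  calc ∑ σ : Equiv.Perm (Fin ℓ), ∑ f : Fin ℓ → Finset (Fin n),
        (if (∀ a : Fin ℓ, IsPathSet E (f a) (A a) (B (σ a))) then
          ((Equiv.Perm.sign σ : ℤ) : ℝ) * ∏ a : Fin ℓ, pathWeight Λ (f a) else 0)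
      = (∑ σ : Equiv.Perm (Fin ℓ), ∑ f : Fin ℓ → Finset (Fin n),
          (if (∀ a : Fin ℓ, IsPathSet E (f a) (A a) (B (σ a))) ∧
              (∀ a b : Fin ℓ, a ≠ b → Disjoint (f a) (f b)) then
            ((Equiv.Perm.sign σ : ℤ) : ℝ) * ∏ a : Fin ℓ, pathWeight Λ (f a) else 0))
        + (∑ σ : Equiv.Perm (Fin ℓ), ∑ f : Fin ℓ → Finset (Fin n),
          (if (∀ a : Fin ℓ, IsPathSet E (f a) (A a) (B (σ a))) ∧
              ¬(∀ a b : Fin ℓ, a ≠ b → Disjoint (f a) (f b)) then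
            ((Equiv.Perm.sign σ : ℤ) : ℝ) * ∏ a : Fin ℓ, pathWeight Λ (f a) else 0)) := by
        rw [← Finset.sum_add_distrib]
        refine Finset.sum_congr rfl fun σ _ => ?_
        rw [← Finset.sum_add_distrib]
        exact Finset.sum_congr rfl fun f _ => decomp σ f
    _ = ∑ σ : Equiv.Perm (Fin ℓ), ∑ f : Fin ℓ → Finset (Fin n),
          (if (∀ a : Fin ℓ, IsPathSet E (f a) (A a) (B (σ a))) ∧
              (∀ a b : Fin ℓ, a ≠ b → Disjoint (f a) (f b)) then
            ((Equiv.Perm.sign σ : ℤ) : ℝ) * ∏ a : Fin ℓ, pathWeight Λ (f a) else 0) := by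
        have h0 := involution_sum E Λ A B
        rw [Fintype.sum_prod_type] at h0
        rw [h0, add_zero]

end Main
end GVL

namespace GVL

variable {n ℓ : ℕ}

/-- successor uniqueness in a nodup list -/
lemma succ_unique : ∀ {l : List (Fin n)}, l.Nodup → ∀ {x y z : Fin n},
    (x, y) ∈ l.zip l.tail → (x, z) ∈ l.zip l.tail → y = z
  | [], _, _, _, _, h1, _ => by simp at h1
  | [a], _, _, _, _, h1, _ => by simp at h1
  | a :: b :: t, hnd, x, y, z, h1, h2 => by
    simp only [List.tail_cons, List.zip_cons_cons, List.mem_cons, Prod.mk.injEq] at h1 h2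
    rcases h1 with ⟨h1a, h1b⟩ | h1
    · rcases h2 with ⟨h2a, h2b⟩ | h2
      · rw [h1b, h2b]
      · exfalso
        have hx : x ∈ b :: t := (List.of_mem_zip h2).1
        rw [h1a] at hx
        exact (List.nodup_cons.mp hnd).1 hx
    · rcases h2 with ⟨h2a, h2b⟩ | h2
      · exfalso
        have hx : x ∈ b :: t := (List.of_mem_zip h1).1
        rw [h2a] at hx
        exact (List.nodup_cons.mp hnd).1 hx
      · exact succ_unique (List.nodup_cons.mp hnd).2 h1 h2

/-- two chains of a functional relation starting at the same point: one is a prefix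
    of the other -/
lemma chain_prefix {D : Fin n → Fin n → Prop}
    (hfun : ∀ x y z, D x y → D x z → y = z) :
    ∀ (p : List (Fin n)), ∀ (q : List (Fin n)), p.Chain' D → q.Chain' D →
      (hp : p ≠ []) → (hq : q ≠ []) → p.head hp = q.head hq → p <+: q ∨ q <+: p
  | [], _, _, _, hp, _, _ => absurd rfl hp
  | [x], q, _, _, _, hq, hhead => by
    left
    refine ⟨q.tail, ?_⟩
    have := List.cons_head_tail hq
    rw [← hhead] at this
    simpa using this
  | x :: x' :: p', q, hcp, hcq, hp, hq, hhead => by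
    cases q with
    | nil => exact absurd rfl hq
    | cons y q' =>
      obtain rfl : x = y := hhead
      cases q' with
      | nil =>
        right
        exact ⟨x' :: p', rfl⟩
      | cons y' q'' =>
        have hD1 : D x x' := (List.isChain_cons_cons.mp hcp).1
        have hD2 : D x y' := (List.isChain_cons_cons.mp hcq).1
        obtain rfl : x' = y' := hfun x x' y' hD1 hD2
        have := chain_prefix hfun (x' :: p') (x' :: q'')
          (List.isChain_cons_cons.mp hcp).2 (List.isChain_cons_cons.mp hcq).2
          (by simp) (by simp) rfl
        rcases this with h | h
        · exact Or.inl (List.cons_prefix_cons.mpr ⟨rfl, h⟩)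
        · exact Or.inr (List.cons_prefix_cons.mpr ⟨rfl, h⟩)

lemma prefix_eq_of_getLast {l l' : List (Fin n)} (h : l <+: l') (hnd : l'.Nodup)
    (hl : l ≠ []) (hl' : l' ≠ []) (heq : l.getLast hl = l'.getLast hl') : l = l' := by
  obtain ⟨t, rfl⟩ := h
  rcases eq_or_ne t [] with rfl | ht
  · simp
  · exfalso
    have hlast : (l ++ t).getLast hl' = t.getLast ht := by
      rw [List.getLast_append]
      rw [dif_neg (by simpa using ht)]
    have hmem : l.getLast hl ∈ t := by
      rw [heq, hlast]
      exact List.getLast_mem ht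
    have hdisj := (List.nodup_append.mp hnd).2.2
    exact hdisj _ (List.getLast_mem hl) _ hmem rfl

lemma sort_injective {S T : Finset (Fin n)}
    (h : S.sort (· ≤ ·) = T.sort (· ≤ ·)) : S = T := by
  ext x
  rw [← Finset.mem_sort (α := Fin n) (· ≤ ·), h, Finset.mem_sort]

section Part2

variable (E : Fin n → Fin n → Prop) [DecidableRel E]
variable (A B : Fin ℓ → Fin n)

/-- the 0/1 edge-indicator matrix of a path system -/
noncomputable def lam0 (f₀ : Fin ℓ → Finset (Fin n)) : Matrix (Fin n) (Fin n) ℝ :=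
  fun a b => if ∃ c : Fin ℓ,
    (a, b) ∈ ((f₀ c).sort (· ≤ ·)).zip ((f₀ c).sort (· ≤ ·)).tail then 1 else 0

lemma lam0_support {f₀ : Fin ℓ → Finset (Fin n)}
    (hvalid : ∀ c, ((f₀ c).sort (· ≤ ·)).Chain' E) :
    ∀ a b : Fin n, ¬E a b → lam0 f₀ a b = 0 := by
  intro a b hab
  rw [lam0, if_neg]
  rintro ⟨c, hc⟩
  exact hab (chain'_iff_zip.mp (hvalid c) _ hc)

lemma lam0_weight_one {f₀ : Fin ℓ → Finset (Fin n)} (c : Fin ℓ) :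
    pathWeight (lam0 f₀) (f₀ c) = 1 := by
  rw [pathWeight]
  refine List.prod_eq_one ?_
  intro x hx
  obtain ⟨p, hp, rfl⟩ := List.mem_map.mp hx
  rw [lam0]
  have : (p.1, p.2) ∈ ((f₀ c).sort (· ≤ ·)).zip ((f₀ c).sort (· ≤ ·)).tail := hp
  rw [if_pos ⟨c, this⟩]

/-- the relation `D`: consecutive pair on one of the paths of `f₀` -/
def drel (f₀ : Fin ℓ → Finset (Fin n)) (x y : Fin n) : Prop :=
  ∃ c : Fin ℓ, (x, y) ∈ ((f₀ c).sort (· ≤ ·)).zip ((f₀ c).sort (· ≤ ·)).tail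

lemma drel_fun {f₀ : Fin ℓ → Finset (Fin n)}
    (hdisj : ∀ a b : Fin ℓ, a ≠ b → Disjoint (f₀ a) (f₀ b)) :
    ∀ x y z, drel f₀ x y → drel f₀ x z → y = z := by
  rintro x y z ⟨c, hc⟩ ⟨c', hc'⟩
  have hcc : c = c' := by
    by_contra hne
    have hx1 : x ∈ f₀ c := by
      rw [← Finset.mem_sort (α := Fin n) (· ≤ ·)]
      exact (List.of_mem_zip hc).1
    have hx2 : x ∈ f₀ c' := by
      rw [← Finset.mem_sort (α := Fin n) (· ≤ ·)]
      exact (List.of_mem_zip hc').1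
    exact (Finset.disjoint_left.mp (hdisj c c' hne)) hx1 hx2
  subst hcc
  exact succ_unique (Finset.sort_nodup _ _) hc hc'

lemma system_unique {σ₀ σ : Equiv.Perm (Fin ℓ)} {f₀ f : Fin ℓ → Finset (Fin n)}
    (hB : Function.Injective B)
    (hvalid₀ : ∀ a, IsPathSet E (f₀ a) (A a) (B (σ₀ a)))
    (hdisj₀ : ∀ a b : Fin ℓ, a ≠ b → Disjoint (f₀ a) (f₀ b))
    (hvalid : ∀ a, IsPathSet E (f a) (A a) (B (σ a)))
    (hdisj : ∀ a b : Fin ℓ, a ≠ b → Disjoint (f a) (f b))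
    (hedge : ∀ a, ∀ p ∈ ((f a).sort (· ≤ ·)).zip ((f a).sort (· ≤ ·)).tail,
      drel f₀ p.1 p.2) :
    σ = σ₀ ∧ f = f₀ := by
  have key : ∀ a : Fin ℓ, σ a = σ₀ a ∧ f a = f₀ a := by
    intro a
    have hca : ((f a).sort (· ≤ ·)).Chain' (drel f₀) := chain'_iff_zip.mpr (hedge a)
    have hca₀ : ((f₀ a).sort (· ≤ ·)).Chain' (drel f₀) := by
      rw [chain'_iff_zip]
      intro p hp
      exact ⟨a, hp⟩
    have hhead : ((f a).sort (· ≤ ·)).head (path_sort_ne_nil (hvalid a))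
        = ((f₀ a).sort (· ≤ ·)).head (path_sort_ne_nil (hvalid₀ a)) := by
      rw [path_head (hvalid a), path_head (hvalid₀ a)]
    have hpre := chain_prefix (drel_fun hdisj₀) _ _ hca hca₀
      (path_sort_ne_nil (hvalid a)) (path_sort_ne_nil (hvalid₀ a)) hhead
    have hσ : σ a = σ₀ a := by
      rcases hpre with hp | hp
      · -- f a is a prefix of f₀ a : B (σ a) ∈ f₀ a
        have hmem : B (σ a) ∈ f₀ a := by
          rw [← Finset.mem_sort (α := Fin n) (· ≤ ·)]
          refine hp.subset ?_
          rw [← path_getLast (hvalid a)]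
          exact List.getLast_mem _
        set c := σ₀⁻¹ (σ a) with hc
        have hBc : B (σ₀ c) = B (σ a) := by rw [hc, show σ₀ (σ₀⁻¹ (σ a)) = σ a from σ₀.apply_symm_apply (σ a)]
        have hmem' : B (σ a) ∈ f₀ c := by
          rw [← hBc]
          exact path_mem_right (hvalid₀ c)
        have hac : a = c := by
          by_contra hne
          exact (Finset.disjoint_left.mp (hdisj₀ a c hne)) hmem hmem'
        have := hBc
        rw [← hac] at this
        exact hB this.symm
      · -- f₀ a is a prefix of f a : B (σ₀ a) ∈ f a
        have hmem : B (σ₀ a) ∈ f a := by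
          rw [← Finset.mem_sort (α := Fin n) (· ≤ ·)]
          refine hp.subset ?_
          rw [← path_getLast (hvalid₀ a)]
          exact List.getLast_mem _
        set c := σ⁻¹ (σ₀ a) with hc
        have hBc : B (σ c) = B (σ₀ a) := by rw [hc, show σ (σ⁻¹ (σ₀ a)) = σ₀ a from σ.apply_symm_apply (σ₀ a)]
        have hmem' : B (σ₀ a) ∈ f c := by
          rw [← hBc]
          exact path_mem_right (hvalid c)
        have hac : a = c := by
          by_contra hne
          exact (Finset.disjoint_left.mp (hdisj a c hne)) hmem hmem'
        have := hBc
        rw [← hac] at this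
        exact hB this
    refine ⟨hσ, ?_⟩
    have hlast : ((f a).sort (· ≤ ·)).getLast (path_sort_ne_nil (hvalid a))
        = ((f₀ a).sort (· ≤ ·)).getLast (path_sort_ne_nil (hvalid₀ a)) := by
      rw [path_getLast (hvalid a), path_getLast (hvalid₀ a), hσ]
    rcases hpre with hp | hp
    · exact sort_injective (prefix_eq_of_getLast hp (Finset.sort_nodup _ _) _ _ hlast)
    · exact (sort_injective (prefix_eq_of_getLast hp (Finset.sort_nodup _ _) _ _
        hlast.symm)).symm
  exact ⟨Equiv.ext fun a => (key a).1, funext fun a => (key a).2⟩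

end Part2
end GVL

namespace GVL

variable {n ℓ : ℕ}

section Final

variable (E : Fin n → Fin n → Prop) [DecidableRel E]

lemma part2core (hE : ∀ a b : Fin n, E a b → a < b) (A B : Fin ℓ → Fin n)
    (hB : Function.Injective B)
    (h0 : ∀ Λ : Matrix (Fin n) (Fin n) ℝ, (∀ a b : Fin n, ¬E a b → Λ a b = 0) →
      (((1 - Λ)⁻¹).submatrix A B).det = 0)
    {σ₀ : Equiv.Perm (Fin ℓ)} {f₀ : Fin ℓ → Finset (Fin n)}
    (hvalid₀ : ∀ a, IsPathSet E (f₀ a) (A a) (B (σ₀ a)))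
    (hdisj₀ : ∀ a b : Fin ℓ, a ≠ b → Disjoint (f₀ a) (f₀ b)) : False := by
  have hΛ₀ := lam0_support E (f₀ := f₀) (fun c => (hvalid₀ c).1)
  have hdet := h0 (lam0 f₀) hΛ₀
  rw [part1 E (lam0 f₀) hE A B hΛ₀] at hdet
  have inner_zero : ∀ σ : Equiv.Perm (Fin ℓ), ∀ f : Fin ℓ → Finset (Fin n),
      (σ ≠ σ₀ ∨ f ≠ f₀) →
      (if (∀ a : Fin ℓ, IsPathSet E (f a) (A a) (B (σ a))) ∧
          ∀ a b : Fin ℓ, a ≠ b → Disjoint (f a) (f b) then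
        ((Equiv.Perm.sign σ : ℤ) : ℝ) * ∏ a : Fin ℓ, pathWeight (lam0 f₀) (f a)
      else 0) = 0 := by
    intro σ f hne
    by_cases hc : (∀ a : Fin ℓ, IsPathSet E (f a) (A a) (B (σ a))) ∧
        ∀ a b : Fin ℓ, a ≠ b → Disjoint (f a) (f b)
    · by_cases hw : ∏ a : Fin ℓ, pathWeight (lam0 f₀) (f a) = 0
      · rw [if_pos hc, hw, mul_zero]
      · exfalso
        have hedge : ∀ a, ∀ p ∈ ((f a).sort (· ≤ ·)).zip ((f a).sort (· ≤ ·)).tail,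
            drel f₀ p.1 p.2 := by
          intro a p hp
          have hwa : pathWeight (lam0 f₀) (f a) ≠ 0 :=
            Finset.prod_ne_zero_iff.mp hw a (Finset.mem_univ a)
          by_contra hd
          apply hwa
          rw [pathWeight]
          refine List.prod_eq_zero ?_
          refine List.mem_map.mpr ⟨p, hp, ?_⟩
          show lam0 f₀ p.1 p.2 = 0
          rw [lam0, if_neg]
          exact fun hex => hd hex
        obtain ⟨hσ, hf⟩ := system_unique E A B hB hvalid₀ hdisj₀ hc.1 hc.2 hedge
        rcases hne with hne | hne
        · exact hne hσ
        · exact hne hf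
    · rw [if_neg hc]
  have hsum : (∑ σ : Equiv.Perm (Fin ℓ), ∑ f : Fin ℓ → Finset (Fin n),
      if (∀ a : Fin ℓ, IsPathSet E (f a) (A a) (B (σ a))) ∧
          ∀ a b : Fin ℓ, a ≠ b → Disjoint (f a) (f b) then
        ((Equiv.Perm.sign σ : ℤ) : ℝ) * ∏ a : Fin ℓ, pathWeight (lam0 f₀) (f a)
      else 0) = ((Equiv.Perm.sign σ₀ : ℤ) : ℝ) := by
    rw [Finset.sum_eq_single σ₀
      (fun b _ hb => Finset.sum_eq_zero fun f _ => inner_zero b f (Or.inl hb))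
      (fun h => absurd (Finset.mem_univ σ₀) h)]
    rw [Finset.sum_eq_single f₀
      (fun f _ hf => inner_zero σ₀ f (Or.inr hf))
      (fun h => absurd (Finset.mem_univ f₀) h)]
    rw [if_pos ⟨hvalid₀, hdisj₀⟩]
    have hone : ∏ a : Fin ℓ, pathWeight (lam0 f₀) (f₀ a) = 1 :=
      Finset.prod_eq_one fun a _ => lam0_weight_one a
    rw [hone, mul_one]
  rw [hsum] at hdet
  have : (Equiv.Perm.sign σ₀ : ℤ) = 0 := by exact_mod_cast hdet
  exact Units.ne_zero _ this

end Final
end GVL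

/-- Gessel–Viennot–Lindström: det ((I−Λ)⁻¹)_{A,B} equals the signed sum over systems
    of pairwise vertex-disjoint directed paths connecting A bijectively to B; it
    vanishes identically in the edge weights iff every system of ℓ directed paths
    from A to B has two paths sharing a vertex. -/
theorem gessel_viennot_lindstrom (m ℓ : ℕ) (E : Fin m → Fin m → Prop)
    [DecidableRel E] (hE : ∀ a b : Fin m, E a b → a < b)
    (A B : Fin ℓ → Fin m) (hA : Function.Injective A) (hB : Function.Injective B) :
    (∀ Λ : Matrix (Fin m) (Fin m) ℝ, (∀ a b : Fin m, ¬E a b → Λ a b = 0) →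
        (((1 - Λ)⁻¹).submatrix A B).det =
          ∑ σ : Equiv.Perm (Fin ℓ), ∑ f : Fin ℓ → Finset (Fin m),
            if (∀ a : Fin ℓ, IsPathSet E (f a) (A a) (B (σ a))) ∧
                ∀ a b : Fin ℓ, a ≠ b → Disjoint (f a) (f b) then
              ((Equiv.Perm.sign σ : ℤ) : ℝ) * ∏ a : Fin ℓ, pathWeight Λ (f a)
            else 0) ∧
      ((∀ Λ : Matrix (Fin m) (Fin m) ℝ, (∀ a b : Fin m, ¬E a b → Λ a b = 0) →
          (((1 - Λ)⁻¹).submatrix A B).det = 0) ↔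
        ∀ (σ : Equiv.Perm (Fin ℓ)) (f : Fin ℓ → Finset (Fin m)),
          (∀ a : Fin ℓ, IsPathSet E (f a) (A a) (B (σ a))) →
            ∃ a b : Fin ℓ, a ≠ b ∧ ¬Disjoint (f a) (f b)) := by
  constructor
  · intro Λ hΛ
    exact GVL.part1 E Λ hE A B hΛ
  · constructor
    · intro h0 σ f hpath
      by_contra hnc
      push_neg at hnc
      exact GVL.part2core E hE A B hB h0 hpath hnc
    · intro hcross Λ hΛ
      rw [GVL.part1 E Λ hE A B hΛ]
      refine Finset.sum_eq_zero fun σ _ => Finset.sum_eq_zero fun f _ => ?_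
      rw [if_neg]
      rintro ⟨hpath, hdisj⟩
      obtain ⟨a, b, hab, hnd⟩ := hcross σ f hpath
      exact hnd (hdisj a b hab)
end

section
/- Let G = (V,D,B) be an acyclic mixed graph with Λ ∈ ℝ^{D} (strictly upper triangular in topological order) and Ω symmetric supported on B plus diagonal. For every pair i, j ∈ V, the (i,j) entry of Σ = (I−Λ)^{-T} Ω (I−Λ)^{-1} equals the sum over all treks τ from i to j of the trek monomial σ(τ) = ω_{top} · Π (edge coefficients along the left side) · Π (edge coefficients along the right side). (Trek rule.) -/
open scoped Matrix

set_option linter.unusedSectionVars false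

section Aux
variable {n : ℕ} (E : Fin n → Fin n → Prop) [DecidableRel E]
  (Λ : Matrix (Fin n) (Fin n) ℝ)

noncomputable def Mmat : Matrix (Fin n) (Fin n) ℝ := fun a i =>
  ∑ S : Finset (Fin n), if IsPathSet E S a i then pathWeight Λ S else 0

lemma pathset_singleton (a i : Fin n) : IsPathSet E ({a} : Finset (Fin n)) a i ↔ a = i := by
  simp [IsPathSet, Finset.sort_singleton, List.Chain', List.isChain_singleton]

lemma pathWeight_singleton (a : Fin n) : pathWeight Λ ({a} : Finset (Fin n)) = 1 := by
  simp [pathWeight, Finset.sort_singleton]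

/-- Forward: extending a path set by a new minimum. -/
lemma pathset_forward {a b i : Fin n} {T : Finset (Fin n)} (hab : a < b) (hE : E a b)
    (hT : IsPathSet E T b i) :
    a ∉ T ∧ (insert a T).sort (· ≤ ·) = a :: T.sort (· ≤ ·) ∧
      IsPathSet E (insert a T) a i ∧ insert a T ≠ {a} ∧
      pathWeight Λ (insert a T) = Λ a b * pathWeight Λ T ∧
      ((insert a T).sort (· ≤ ·)).tail.headD a = b := by
  obtain ⟨hc, hh, hl⟩ := hT
  have hcons : T.sort (· ≤ ·) = b :: (T.sort (· ≤ ·)).tail := by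
    cases h : T.sort (· ≤ ·) with
    | nil => rw [h] at hh; simp at hh
    | cons x l => rw [h] at hh; simp at hh; simp [hh]
  have hble : ∀ x ∈ T, b ≤ x := by
    intro x hx
    have hx' : x ∈ T.sort (· ≤ ·) := (Finset.mem_sort _).2 hx
    rw [hcons] at hx'
    rcases List.mem_cons.1 hx' with h | h
    · exact h.ge
    · exact List.rel_of_pairwise_cons (hcons ▸ Finset.pairwise_sort T (· ≤ ·)) h
  have halt : ∀ x ∈ T, a < x := fun x hx => lt_of_lt_of_le hab (hble x hx)
  have haT : a ∉ T := fun h => lt_irrefl a (halt a h)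
  have hsort : (insert a T).sort (· ≤ ·) = a :: T.sort (· ≤ ·) :=
    Finset.sort_insert _ (fun x hx => (halt x hx).le) haT
  have hbT : b ∈ T := by
    have : b ∈ T.sort (· ≤ ·) := by rw [hcons]; exact List.mem_cons_self
    exact (Finset.mem_sort _).1 this
  refine ⟨haT, hsort, ⟨?_, ?_, ?_⟩, ?_, ?_, ?_⟩
  · rw [hsort, hcons]
    exact List.isChain_cons_cons.2 ⟨hE, hcons ▸ hc⟩
  · rw [hsort]; rfl
  · rw [hsort, hcons, List.getLast?_cons_cons, ← hcons]; exact hl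
  · intro h
    have : b ∈ ({a} : Finset (Fin n)) := h ▸ Finset.mem_insert_of_mem hbT
    simp at this
    exact absurd this.symm (ne_of_lt hab)
  · unfold pathWeight
    rw [hsort, hcons]
    simp
  · rw [hsort, hcons]; rfl

/-- Backward: decomposing a non-singleton path set. -/
lemma pathset_backward {a i : Fin n} {S : Finset (Fin n)} (hS : IsPathSet E S a i)
    (hne : S ≠ {a}) :
    ∃ b, E a b ∧ a ∈ S ∧ (S.sort (· ≤ ·)).tail.headD a = b ∧
      IsPathSet E (S.erase a) b i ∧ (S.erase a).sort (· ≤ ·) = (S.sort (· ≤ ·)).tail := by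
  obtain ⟨hc, hh, hl⟩ := hS
  have hcons : S.sort (· ≤ ·) = a :: (S.sort (· ≤ ·)).tail := by
    cases h : S.sort (· ≤ ·) with
    | nil => rw [h] at hh; simp at hh
    | cons x l => rw [h] at hh; simp at hh; simp [hh]
  have haS : a ∈ S := by
    have : a ∈ S.sort (· ≤ ·) := by rw [hcons]; exact List.mem_cons_self
    exact (Finset.mem_sort _).1 this
  have htne : (S.sort (· ≤ ·)).tail ≠ [] := by
    intro h
    apply hne
    have : S.sort (· ≤ ·) = [a] := by rw [hcons, h]
    have h2 := Finset.sort_toFinset S (· ≤ ·)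
    rw [this] at h2
    simpa using h2.symm
  obtain ⟨b, rest, hbr⟩ := List.exists_cons_of_ne_nil htne
  have hEab : E a b := by
    have := hc
    rw [hcons, hbr] at this
    exact (List.isChain_cons_cons.1 this).1
  have hab : ∀ x ∈ (S.sort (· ≤ ·)).tail, a ≤ x := by
    have hs := Finset.pairwise_sort S (· ≤ ·)
    rw [hcons] at hs
    exact fun x hx => List.rel_of_pairwise_cons hs hx
  have haer : a ∉ S.erase a := Finset.notMem_erase a S
  have hle : ∀ x ∈ S.erase a, a ≤ x := by
    intro x hx
    have hxS : x ∈ S := Finset.mem_of_mem_erase hx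
    have hxne : x ≠ a := Finset.ne_of_mem_erase hx
    have : x ∈ S.sort (· ≤ ·) := (Finset.mem_sort _).2 hxS
    rw [hcons] at this
    rcases List.mem_cons.1 this with h | h
    · exact absurd h hxne
    · exact hab x h
  have hse : (S.erase a).sort (· ≤ ·) = (S.sort (· ≤ ·)).tail := by
    have h1 : (insert a (S.erase a)).sort (· ≤ ·) = a :: (S.erase a).sort (· ≤ ·) :=
      Finset.sort_insert _ hle haer
    rw [Finset.insert_erase haS, hcons] at h1
    exact (List.cons_injective h1).symm ▸ rfl
  refine ⟨b, hEab, haS, by rw [hbr]; rfl, ⟨?_, ?_, ?_⟩, hse⟩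
  · rw [hse]
    have := hc; rw [hcons] at this
    exact this.tail
  · rw [hse, hbr]; rfl
  · rw [hse]
    have := hl; rw [hcons, hbr] at this
    rw [hbr, ← List.getLast?_cons_cons (l := rest) (a := a)]
    exact this

lemma Mmat_rec (hE : ∀ a b : Fin n, E a b → a < b)
    (hΛ : ∀ a b : Fin n, ¬E a b → Λ a b = 0) (a i : Fin n) :
    Mmat E Λ a i = (if a = i then 1 else 0) + ∑ b, Λ a b * Mmat E Λ b i := by
  have hsplit : Mmat E Λ a i =
      (∑ S : Finset (Fin n), if S = {a} then
        (if IsPathSet E S a i then pathWeight Λ S else 0) else 0)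
      + ∑ S : Finset (Fin n), if IsPathSet E S a i ∧ S ≠ {a} then pathWeight Λ S else 0 := by
    rw [Mmat, ← Finset.sum_add_distrib]
    apply Finset.sum_congr rfl
    intro S _
    by_cases h1 : S = {a} <;> by_cases h2 : IsPathSet E S a i <;> simp [h1, h2]
  have hfirst : (∑ S : Finset (Fin n), if S = {a} then
        (if IsPathSet E S a i then pathWeight Λ S else 0) else 0)
      = (if a = i then 1 else 0) := by
    rw [Finset.sum_ite_eq' Finset.univ ({a} : Finset (Fin n))
      (fun S => if IsPathSet E S a i then pathWeight Λ S else 0)]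
    simp [pathset_singleton, pathWeight_singleton]
  have hsecond : ∑ b, Λ a b * Mmat E Λ b i
      = ∑ S : Finset (Fin n), if IsPathSet E S a i ∧ S ≠ {a} then pathWeight Λ S else 0 := by
    have step1 : ∀ b, Λ a b * Mmat E Λ b i =
        ∑ T : Finset (Fin n), if IsPathSet E T b i ∧ E a b then
          Λ a b * pathWeight Λ T else 0 := by
      intro b
      rw [Mmat, Finset.mul_sum]
      apply Finset.sum_congr rfl
      intro T _
      by_cases hP : IsPathSet E T b i <;> by_cases hQ : E a b <;>
        simp [hP, hQ, hΛ a b]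
    simp_rw [step1]
    rw [← Fintype.sum_prod_type (f := fun p : Fin n × Finset (Fin n) =>
      if IsPathSet E p.2 p.1 i ∧ E a p.1 then Λ a p.1 * pathWeight Λ p.2 else 0)]
    rw [← Finset.sum_filter, ← Finset.sum_filter]
    apply Finset.sum_nbij' (i := fun p : Fin n × Finset (Fin n) => insert a p.2)
      (j := fun S : Finset (Fin n) => ((S.sort (· ≤ ·)).tail.headD a, S.erase a))
    · intro p hp
      obtain ⟨hT, hEab⟩ := by simpa using Finset.mem_filter.1 hp
      obtain ⟨_, _, hps, hne, _, _⟩ := pathset_forward E Λ (hE _ _ hEab) hEab hT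
      simp [Finset.mem_filter, hps, hne]
    · intro S hS
      obtain ⟨hS', hne⟩ := by simpa using Finset.mem_filter.1 hS
      obtain ⟨b, hEab, haS, hb, hps, -⟩ := pathset_backward E hS' hne
      exact Finset.mem_filter.2 ⟨Finset.mem_univ _,
        by rw [hb]; exact hps, by rw [hb]; exact hEab⟩
    · intro p hp
      obtain ⟨hT, hEab⟩ := by simpa using Finset.mem_filter.1 hp
      obtain ⟨haT, _, _, _, _, hhd⟩ := pathset_forward E Λ (hE _ _ hEab) hEab hT
      exact Prod.ext hhd (Finset.erase_insert haT)
    · intro S hS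
      obtain ⟨hS', hne⟩ := by simpa using Finset.mem_filter.1 hS
      obtain ⟨b, hEab, haS, hb, hps, -⟩ := pathset_backward E hS' hne
      exact Finset.insert_erase haS
    · intro p hp
      obtain ⟨hT, hEab⟩ := by simpa using Finset.mem_filter.1 hp
      obtain ⟨_, _, _, _, hw, _⟩ := pathset_forward E Λ (hE _ _ hEab) hEab hT
      exact hw.symm
  rw [hsplit, hfirst, hsecond]


lemma Mmat_inv (hE : ∀ a b : Fin n, E a b → a < b)
    (hΛ : ∀ a b : Fin n, ¬E a b → Λ a b = 0) :
    (1 - Λ : Matrix (Fin n) (Fin n) ℝ)⁻¹ = Mmat E Λ := by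
  apply Matrix.inv_eq_right_inv
  ext a i
  rw [Matrix.mul_apply]
  simp only [Matrix.sub_apply, Matrix.one_apply, sub_mul]
  rw [Finset.sum_sub_distrib]
  have h1 : ∑ b, (if a = b then (1:ℝ) else 0) * Mmat E Λ b i = Mmat E Λ a i := by simp
  rw [h1, Mmat_rec E Λ hE hΛ a i]
  ring

end Aux

/-- Trek rule: the (i,j) entry of Σ = (I−Λ)^{-T} Ω (I−Λ)^{-1} is the sum, over all
    treks from i to j (a trek being a directed path from a top vertex a down to i
    together with a directed path from a top vertex b down to j, weighted by
    ω_{ab}), of the trek monomials. -/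
theorem trek_rule (n : ℕ) (E : Fin n → Fin n → Prop) [DecidableRel E]
    (hE : ∀ a b : Fin n, E a b → a < b)
    (B : Fin n → Fin n → Prop)
    (Λ Ω : Matrix (Fin n) (Fin n) ℝ)
    (hΛ : ∀ a b : Fin n, ¬E a b → Λ a b = 0)
    (hΩ : Ω.IsSymm)
    (hΩB : ∀ a b : Fin n, a ≠ b → ¬B a b → Ω a b = 0)
    (i j : Fin n) :
    ((((1 - Λ)⁻¹)ᵀ * Ω * (1 - Λ)⁻¹ : Matrix (Fin n) (Fin n) ℝ)) i j =
      ∑ a : Fin n, ∑ b : Fin n, ∑ S : Finset (Fin n), ∑ T : Finset (Fin n),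
        if IsPathSet E S a i ∧ IsPathSet E T b j then
          Ω a b * pathWeight Λ S * pathWeight Λ T
        else 0 := by
  rw [Mmat_inv E Λ hE hΛ]
  rw [Matrix.mul_apply]
  have key : ∀ b, ((Mmat E Λ)ᵀ * Ω) i b * Mmat E Λ b j
      = ∑ a, Mmat E Λ a i * Ω a b * Mmat E Λ b j := by
    intro b
    rw [Matrix.mul_apply, Finset.sum_mul]
    apply Finset.sum_congr rfl
    intro a _
    rw [Matrix.transpose_apply]
  simp_rw [key]
  rw [Finset.sum_comm]
  apply Finset.sum_congr rfl
  intro a _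
  apply Finset.sum_congr rfl
  intro b _
  rw [Mmat, Mmat, Finset.sum_mul, Finset.sum_mul]
  apply Finset.sum_congr rfl
  intro S _
  rw [Finset.mul_sum]
  apply Finset.sum_congr rfl
  intro T _
  by_cases h1 : IsPathSet E S a i <;> by_cases h2 : IsPathSet E T b j
  · rw [if_pos h1, if_pos h2, if_pos ⟨h1, h2⟩]; ring
  · rw [if_pos h1, if_neg h2, if_neg (by tauto)]; ring
  · rw [if_neg h1, if_pos h2, if_neg (by tauto)]; ring
  · rw [if_neg h1, if_neg h2, if_neg (by tauto)]; ring
end
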